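/- arXiv:0706.4257 — 2 statements merged into one kernel-verified Lean document; each statement's English description precedes it below -/
import Mathlib

section
/- Let X = (X,d,μ) be a metric measure space satisfying the locally doubling property, and fix u, v > 0. Then there exists a constant C = C(u,v) < ∞ such that for every Borel subset A ⊆ X that is u-thick (i.e. A is a union of closed balls of radius u), one has μ([A]_v) ≤ C·μ(A), where [A]_v = {x ∈ X : d(x,A) ≤ v}. -/
open MeasureTheory Set Filter Topology ENNReal Pointwise

section Preamble

variable {G : Type*}

/-- Word length with respect to a generating set `S`: least `n` with `g ∈ Sⁿ`. -/
noncomputable def wordLength [Group G] (S : Set G) (g : G) : ℕ := sInf {n : ℕ | g ∈ S ^ n}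

/-- Left-invariant word metric `d_S(g,h)`. -/
noncomputable def wordDist [Group G] (S : Set G) (g h : G) : ℕ := wordLength S (g⁻¹ * h)

/-- Closed ball of radius `r` around the identity for the word metric. -/
def wordBall [Group G] (S : Set G) (r : ℝ) : Set G := {g : G | (wordLength S g : ℝ) ≤ r}

/-- `S` is a compact symmetric generating subset of `G`. -/
structure IsCompactSymmGen [Group G] [TopologicalSpace G] (S : Set G) : Prop where
  isCompact : IsCompact S
  symm : S⁻¹ = S
  gen : ∀ g : G, ∃ n : ℕ, g ∈ S ^ n

/-- The ratio `‖f‖_p / sup_{s ∈ S} ‖f - λ(s)f‖_p`, where `λ(s)f(x) = f(s⁻¹x)`. -/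
noncomputable def lpRatio [Group G] [MeasurableSpace G] (μ : Measure G) (S : Set G)
    (p : ℝ≥0∞) (f : G → ℝ) : ℝ≥0∞ :=
  eLpNorm f p μ / ⨆ s ∈ S, eLpNorm (f - fun x => f (s⁻¹ * x)) p μ

/-- `J_p(A)`: the supremum of `‖f‖_p / sup_{s∈S} ‖f - λ(s)f‖_p` over nonzero `f ∈ L^p`
supported in `A`. -/
noncomputable def Jprof [Group G] [MeasurableSpace G] (μ : Measure G) (S : Set G)
    (p : ℝ≥0∞) (A : Set G) : ℝ≥0∞ :=
  ⨆ f ∈ {f : G → ℝ | MemLp f p μ ∧ eLpNorm f p μ ≠ 0 ∧ ∀ x ∉ A, f x = 0},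
    lpRatio μ S p f

/-- The `L^p`-isoperimetric profile `j_{G,S,p}(v) = sup {J_p(A) : μ(A) ≤ v}`. -/
noncomputable def jProf [Group G] [MeasurableSpace G] (μ : Measure G) (S : Set G)
    (p : ℝ≥0∞) : ℝ → ℝ≥0∞ :=
  fun v => ⨆ A ∈ {A : Set G | MeasurableSet A ∧ μ A ≤ ENNReal.ofReal v}, Jprof μ S p A

/-- The `L^p`-isoperimetric profile inside balls, `J^b_{G,S,p}(r) = J_p(B_S(e,r))`. -/
noncomputable def JbProf [Group G] [MeasurableSpace G] (μ : Measure G) (S : Set G)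
    (p : ℝ≥0∞) : ℝ → ℝ≥0∞ :=
  fun r => Jprof μ S p (wordBall S r)

/-- `f ≼ g` : there are `C ≥ 1`, `t₀` with `f(t) ≤ C·g(C·t)` for `t ≥ t₀`. -/
def AsympLe (f g : ℝ → ℝ≥0∞) : Prop :=
  ∃ C : ℝ, 1 ≤ C ∧ ∃ t₀ : ℝ, ∀ t ≥ t₀, f t ≤ ENNReal.ofReal C * g (C * t)

/-- Asymptotic equivalence `f ≈ g`. -/
def AsympEquiv (f g : ℝ → ℝ≥0∞) : Prop := AsympLe f g ∧ AsympLe g f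

end Preamble

section MetricMeasurePreamble

variable {X X' Y Z : Type*}

/-- Closed ball for an abstract distance function. -/
def dBall (d : X → X → ℝ) (x : X) (r : ℝ) : Set X := {y : X | d x y ≤ r}

/-- The measure `μ` is finite on bounded subsets (for an abstract distance: subsets of
balls). -/
def FiniteOnBounded [MeasurableSpace X] (d : X → X → ℝ) (μ : MeasureTheory.Measure X) : Prop :=
  ∀ x : X, ∀ r : ℝ, μ (dBall d x r) < ⊤

/-- The locally doubling property: for every `r > 0` there is `C_r` with
`V(x,2r) ≤ C_r · V(x,r)` for every `x`. -/
def LocDoubling [MeasurableSpace X] (d : X → X → ℝ) (μ : MeasureTheory.Measure X) : Prop :=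
  ∀ r : ℝ, 0 < r → ∃ C : ℝ, 0 < C ∧
    ∀ x : X, μ (dBall d x (2 * r)) ≤ ENNReal.ofReal C * μ (dBall d x r)

/-- Local norm of the gradient at scale `h`:
`|∇f|_h(x) = sup {|f(y) − f(x)| : d(x,y) ≤ h}`. -/
noncomputable def locGrad (d : X → X → ℝ) (h : ℝ) (f : X → ℝ) (x : X) : ℝ :=
  ⨆ y : dBall d x h, |f (y : X) - f x|

/-- Sobolev inequality `(S^p_φ)` at scale `h` for the metric measure space `(X,d,μ)`:
`‖f‖_p ≤ C·φ(C'·μ(Ω))·‖|∇f|_h‖_p` for every compact `Ω` and every bounded Borel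
function `f` supported in `Ω` (with Borel measurable local gradient). -/
def SobolevIneq [TopologicalSpace X] [MeasurableSpace X] (d : X → X → ℝ)
    (μ : MeasureTheory.Measure X) (p : ℝ≥0∞) (φ : ℝ → ℝ) (h : ℝ) : Prop :=
  ∃ C : ℝ, 0 < C ∧ ∃ C' : ℝ, 0 < C' ∧
    ∀ (Ω : Set X) (f : X → ℝ), IsCompact Ω → Measurable f →
      (∃ M : ℝ, ∀ x : X, |f x| ≤ M) → (∀ x ∉ Ω, f x = 0) →
      Measurable (locGrad d h f) →
      MeasureTheory.eLpNorm f p μ ≤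
        ENNReal.ofReal (C * φ (C' * (μ Ω).toReal)) *
          MeasureTheory.eLpNorm (locGrad d h f) p μ

/-- Parameters of a large-scale equivalence: the control functions `ρ₋, ρ₊`, the
almost-onto constant `C`, and the volume comparison data `r₀, (C_r)`. -/
structure LSEParams where
  rhoMinus : ℝ → ℝ
  rhoPlus : ℝ → ℝ
  C : ℝ
  r0 : ℝ
  Cr : ℝ → ℝ

/-- `F` is a large-scale equivalence, with parameters `P`, from the subset `A` of the
metric measure space `(X, dX, μ)` onto the subset `B` of `(X', dX', ν)`. -/
def IsLSEBetween [MeasurableSpace X] [MeasurableSpace X']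
    (dX : X → X → ℝ) (A : Set X) (μ : MeasureTheory.Measure X)
    (dX' : X' → X' → ℝ) (B : Set X') (ν : MeasureTheory.Measure X')
    (F : X → X') (P : LSEParams) : Prop :=
  Monotone P.rhoMinus ∧ Monotone P.rhoPlus ∧
  Filter.Tendsto P.rhoMinus Filter.atTop Filter.atTop ∧
  (∀ x ∈ A, F x ∈ B) ∧
  (∀ x ∈ A, ∀ y ∈ A,
    P.rhoMinus (dX x y) ≤ dX' (F x) (F y) ∧ dX' (F x) (F y) ≤ P.rhoPlus (dX x y)) ∧
  (∀ b ∈ B, ∃ a ∈ A, dX' (F a) b ≤ P.C) ∧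
  (∀ r : ℝ, P.r0 ≤ r → 0 < P.Cr r ∧ ∀ x ∈ A,
    ENNReal.ofReal (P.Cr r)⁻¹ * μ (dBall dX x r ∩ A) ≤ ν (dBall dX' (F x) r ∩ B) ∧
    ν (dBall dX' (F x) r ∩ B) ≤ ENNReal.ofReal (P.Cr r) * μ (dBall dX x r ∩ A))

/-- `(X, dX, μ)` is large-scale foliated by `(Y, dY, lam)`, with base `(Z, ν)`, leaves
`leaf z`, leaf measures `lamz z`, large-scale equivalences `hmap z : Y → Y_z` with
parameters `P` independent of `z`. -/
def IsLSFoliation [TopologicalSpace X] [MeasurableSpace X] [MeasurableSpace Y]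
    [MeasurableSpace Z]
    (dX : X → X → ℝ) (μ : MeasureTheory.Measure X)
    (dY : Y → Y → ℝ) (lam : MeasureTheory.Measure Y)
    (ν : MeasureTheory.Measure Z) (leaf : Z → Set X)
    (lamz : Z → MeasureTheory.Measure X) (hmap : Z → Y → X) (P : LSEParams) : Prop :=
  (∀ x : X, ∃! z : Z, x ∈ leaf z) ∧
  (∀ z : Z, lamz z (leaf z)ᶜ = 0) ∧
  (∀ f : X → ℝ, Continuous f → HasCompactSupport f →
    ∫ x, f x ∂μ = ∫ z, (∫ x, f x ∂(lamz z)) ∂ν) ∧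
  (∀ᵐ z ∂ν, IsLSEBetween dY Set.univ lam dX (leaf z) (lamz z) (hmap z) P)

/-- A normal large-scale foliation: a large-scale foliation such that, for a uniform
constant `C ≥ 1`, every `x` in a leaf satisfies `C⁻¹ ≤ V_X(x,1) ≤ C` and
`C⁻¹ ≤ λ_z(B̄(x,1)) ≤ C`. -/
def IsNormalLSFoliation [TopologicalSpace X] [MeasurableSpace X] [MeasurableSpace Y]
    [MeasurableSpace Z]
    (dX : X → X → ℝ) (μ : MeasureTheory.Measure X)
    (dY : Y → Y → ℝ) (lam : MeasureTheory.Measure Y)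
    (ν : MeasureTheory.Measure Z) (leaf : Z → Set X)
    (lamz : Z → MeasureTheory.Measure X) (hmap : Z → Y → X) (P : LSEParams) : Prop :=
  IsLSFoliation dX μ dY lam ν leaf lamz hmap P ∧
  ∃ C : ℝ, 1 ≤ C ∧ ∀ z : Z, ∀ x ∈ leaf z,
    (ENNReal.ofReal C)⁻¹ ≤ μ (dBall dX x 1) ∧ μ (dBall dX x 1) ≤ ENNReal.ofReal C ∧
    (ENNReal.ofReal C)⁻¹ ≤ lamz z (dBall dX x 1) ∧
    lamz z (dBall dX x 1) ≤ ENNReal.ofReal C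

end MetricMeasurePreamble

section AuxLemmas

lemma dBall_eq_closedBall {X : Type*} [MetricSpace X] (x : X) (r : ℝ) :
    dBall (fun a b : X => dist a b) x r = Metric.closedBall x r := by
  ext y; simp [dBall, Metric.closedBall, dist_comm]

lemma iter_doubling {X : Type*} [MetricSpace X] [MeasurableSpace X] (μ : Measure X)
    (hdbl : LocDoubling (fun x y : X => dist x y) μ) {u : ℝ} (hu : 0 < u) (n : ℕ) :
    ∃ D : ℝ, 0 < D ∧ ∀ x : X,
      μ (Metric.closedBall x (2 ^ n * u)) ≤ ENNReal.ofReal D * μ (Metric.closedBall x u) := by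
  induction n with
  | zero => exact ⟨1, one_pos, fun x => by simp⟩
  | succ n ih =>
    obtain ⟨D, hD, hDle⟩ := ih
    obtain ⟨C, hC, hCle⟩ := hdbl (2 ^ n * u) (by positivity)
    refine ⟨C * D, by positivity, fun x => ?_⟩
    have h1 := hCle x
    rw [dBall_eq_closedBall, dBall_eq_closedBall] at h1
    calc μ (Metric.closedBall x (2 ^ (n + 1) * u))
        = μ (Metric.closedBall x (2 * (2 ^ n * u))) := by ring_nf
      _ ≤ ENNReal.ofReal C * μ (Metric.closedBall x (2 ^ n * u)) := h1
      _ ≤ ENNReal.ofReal C * (ENNReal.ofReal D * μ (Metric.closedBall x u)) := by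
          gcongr; exact hDle x
      _ = ENNReal.ofReal (C * D) * μ (Metric.closedBall x u) := by
          rw [ENNReal.ofReal_mul hC.le, mul_assoc]

end AuxLemmas

/-- in a locally doubling metric measure space, for fixed `u, v > 0` there is
a constant `C = C(u,v)` such that every `u`-thick Borel set `A` (a union of closed balls of
radius `u`) satisfies `μ([A]_v) ≤ C·μ(A)`, where `[A]_v` is the closed `v`-neighborhood. -/
theorem measure_cthickening_of_thick
    {X : Type*} [MetricSpace X] [MeasurableSpace X] [BorelSpace X]
    (μ : Measure X)
    (hμfin : FiniteOnBounded (fun x y : X => dist x y) μ)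
    (hdbl : LocDoubling (fun x y : X => dist x y) μ)
    (u v : ℝ) (hu : 0 < u) (hv : 0 < v) :
    ∃ C : ℝ, 0 < C ∧ ∀ A : Set X, MeasurableSet A →
      (∃ I : Set X, A = ⋃ x ∈ I, Metric.closedBall x u) →
      μ (Metric.cthickening v A) ≤ ENNReal.ofReal C * μ A := by
  -- Choose n with 2^n * u ≥ 5 * (u + v + 1), get uniform doubling constant D
  set w : ℝ := u + v + 1 with hwdef
  have hw : w = u + v + 1 := rfl
  have hw0 : 0 < w := by positivity
  obtain ⟨m, hm⟩ := exists_nat_ge (5 * w / u)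
  obtain ⟨D, hD, hDle⟩ := iter_doubling μ hdbl hu m
  have hradle : 5 * w ≤ 2 ^ m * u := by
    have h2 : (m : ℝ) ≤ 2 ^ m := by
      exact_mod_cast (Nat.lt_two_pow_self (n := m)).le
    have : 5 * w / u ≤ 2 ^ m := hm.trans h2
    calc 5 * w = 5 * w / u * u := by field_simp
      _ ≤ 2 ^ m * u := by gcongr
  have hDball : ∀ x : X, μ (Metric.closedBall x (5 * w)) ≤
      ENNReal.ofReal D * μ (Metric.closedBall x u) := fun x =>
    (measure_mono (Metric.closedBall_subset_closedBall hradle)).trans (hDle x)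
  refine ⟨D, hD, fun A hAmeas ⟨I, hAI⟩ => ?_⟩
  by_cases hzero : μ Set.univ = 0
  · have : μ (Metric.cthickening v A) = 0 :=
      le_antisymm ((measure_mono (Set.subset_univ _)).trans hzero.le) bot_le
    simp [this]
  -- every u-ball has positive measure
  have hpos : ∀ x : X, 0 < μ (Metric.closedBall x u) := by
    intro x
    by_contra h
    push_neg at h
    have hx0 : μ (Metric.closedBall x u) = 0 := le_antisymm (nonpos_iff_eq_zero.mp h ▸ le_rfl) bot_le
    apply hzero
    have huniv : Set.univ ⊆ ⋃ n : ℕ, Metric.closedBall x (2 ^ n * u) := by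
      intro y _
      obtain ⟨n, hn⟩ := exists_nat_ge (dist y x / u)
      have h2 : (n : ℝ) ≤ 2 ^ n := by exact_mod_cast (Nat.lt_two_pow_self (n := n)).le
      refine Set.mem_iUnion.2 ⟨n, ?_⟩
      have : dist y x ≤ 2 ^ n * u := by
        have : dist y x / u ≤ 2 ^ n := hn.trans h2
        calc dist y x = dist y x / u * u := by field_simp
          _ ≤ 2 ^ n * u := by gcongr
      exact this
    have : μ (⋃ n : ℕ, Metric.closedBall x (2 ^ n * u)) = 0 := by
      refine measure_iUnion_null fun n => ?_
      obtain ⟨Dn, hDn, hDnle⟩ := iter_doubling μ hdbl hu n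
      have := hDnle x
      rw [hx0, mul_zero] at this
      exact le_antisymm this bot_le
    exact le_antisymm ((measure_mono huniv).trans this.le) bot_le
  have hXne : Nonempty X := by
    by_contra h
    rw [not_nonempty_iff] at h
    exact hzero (by simp [Set.eq_empty_of_isEmpty (Set.univ : Set X)])
  -- sigma-finiteness
  obtain ⟨x₀⟩ := hXne
  have hsf : SigmaFinite μ := by
    refine ⟨⟨⟨fun n => Metric.closedBall x₀ n, fun _ => trivial, fun n => ?_, ?_⟩⟩⟩
    · have := hμfin x₀ n
      rwa [dBall_eq_closedBall] at this
    · refine Set.eq_univ_of_forall fun y => ?_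
      obtain ⟨n, hn⟩ := exists_nat_ge (dist y x₀)
      exact Set.mem_iUnion.2 ⟨n, hn⟩
  -- Vitali covering
  obtain ⟨J, hJI, hJdisj, hJcov⟩ :=
    Vitali.exists_disjoint_subfamily_covering_enlargement_closedBall I id (fun _ => w) w
      (fun _ _ => le_rfl) 5 (by norm_num)
  -- u-balls around J are disjoint
  have hudisj : J.PairwiseDisjoint fun b => Metric.closedBall b u := by
    intro a ha b hb hab
    exact Disjoint.mono (Metric.closedBall_subset_closedBall (by simp [hw]; linarith))
      (Metric.closedBall_subset_closedBall (by simp [hw]; linarith)) (hJdisj ha hb hab)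
  -- J is countable
  have hJcount : J.Countable := by
    have := MeasureTheory.Measure.countable_meas_pos_of_disjoint_iUnion (μ := μ)
      (As := fun b : J => Metric.closedBall (b : X) u)
      (fun b => Metric.isClosed_closedBall.measurableSet)
      (fun a b hab => hudisj a.2 b.2 (Subtype.coe_injective.ne hab))
    have heq : {i : J | 0 < μ (Metric.closedBall (i : X) u)} = Set.univ :=
      Set.eq_univ_of_forall fun b => hpos b
    rw [heq] at this
    exact Set.countable_coe_iff.mp (Set.countable_univ_iff.mp this)
  -- covering of the thickening
  have hcov : Metric.cthickening v A ⊆ ⋃ b ∈ J, Metric.closedBall b (5 * w) := by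
    intro y hy
    have hy' : y ∈ Metric.thickening (v + 1) A :=
      Metric.cthickening_subset_thickening' (by linarith) (by linarith) A hy
    obtain ⟨a, haA, hya⟩ := Metric.mem_thickening_iff.mp hy'
    rw [hAI] at haA
    obtain ⟨x, hxI, hax⟩ := Set.mem_iUnion₂.mp haA
    obtain ⟨b, hbJ, hsub⟩ := hJcov x hxI
    refine Set.mem_iUnion₂.2 ⟨b, hbJ, hsub ?_⟩
    have : dist y x ≤ w := by
      calc dist y x ≤ dist y a + dist a x := dist_triangle y a x
        _ ≤ (v + 1) + u := by
            have h2 := Metric.mem_closedBall.mp hax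
            linarith [hya.le]
        _ = w := by rw [hw]; ring
    exact Metric.mem_closedBall.mpr this
  -- each u-ball with center in J is inside A
  have hsubA : ∀ b ∈ J, Metric.closedBall b u ⊆ A := fun b hb => by
    rw [hAI]; exact Set.subset_biUnion_of_mem (u := fun x => Metric.closedBall x u) (hJI hb)
  calc μ (Metric.cthickening v A) ≤ μ (⋃ b ∈ J, Metric.closedBall b (5 * w)) :=
        measure_mono hcov
    _ ≤ ∑' b : J, μ (Metric.closedBall (b : X) (5 * w)) := measure_biUnion_le μ hJcount _
    _ ≤ ∑' b : J, ENNReal.ofReal D * μ (Metric.closedBall (b : X) u) :=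
        ENNReal.tsum_le_tsum fun b => hDball b
    _ = ENNReal.ofReal D * ∑' b : J, μ (Metric.closedBall (b : X) u) := ENNReal.tsum_mul_left
    _ = ENNReal.ofReal D * μ (⋃ b ∈ J, Metric.closedBall b u) := by
        rw [measure_biUnion hJcount hudisj fun b _ => Metric.isClosed_closedBall.measurableSet]
    _ ≤ ENNReal.ofReal D * μ A := by
        gcongr
        exact Set.iUnion₂_subset hsubA
end

section
/- Let X = (X,d_X,μ) and Y = (Y,d_Y,λ) be locally doubling metric measure spaces and assume X is normally large-scale foliated by Y, with leaves (Y_z)_{z∈Z} and leaf measures (λ_z). Then there exist parameters (ρ₋, ρ₊, C, r₀, (C_r)), independent of z, such that for ν-almost every z ∈ Z the inclusion map (Y_z, d_X restricted, λ_z) → ([Y_z]_1, d_X restricted, μ restricted to [Y_z]_1) is a large-scale equivalence with these parameters, where [Y_z]_1 = {x ∈ X : d_X(x, Y_z) ≤ 1} is the 1-neighborhood of Y_z in X. -/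
open MeasureTheory Set Filter Topology ENNReal Pointwise

section AuxLSE

lemma dBall_dist_eq {W : Type*} [PseudoMetricSpace W] (x : W) (r : ℝ) :
    dBall (fun a b : W => dist a b) x r = Metric.closedBall x r := by
  ext y; simp [dBall, Metric.mem_closedBall, dist_comm]

lemma enn_cancel_left {a x y : ℝ≥0∞} (ha : a ≠ 0) (ha' : a ≠ ⊤) (h : x ≤ a * y) : a⁻¹ * x ≤ y := by
  calc a⁻¹ * x ≤ a⁻¹ * (a * y) := mul_le_mul_right h _
    _ = (a⁻¹ * a) * y := (mul_assoc _ _ _).symm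
    _ = y := by rw [ENNReal.inv_mul_cancel ha ha', one_mul]

lemma enn_le_cancel {a x y : ℝ≥0∞} (ha : a ≠ 0) (ha' : a ≠ ⊤) (h : a⁻¹ * x ≤ y) : x ≤ a * y := by
  calc x = a * (a⁻¹ * x) := by rw [← mul_assoc, ENNReal.mul_inv_cancel ha ha', one_mul]
    _ ≤ a * y := mul_le_mul_right h a

lemma enn_card_bound {n e M : ℝ≥0∞} (he : e ≠ 0) (he' : e ≠ ⊤) (h : n * e ≤ M) : n ≤ M * e⁻¹ := by
  calc n = n * e * e⁻¹ := by rw [mul_assoc, ENNReal.mul_inv_cancel he he', mul_one]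
    _ ≤ M * e⁻¹ := mul_le_mul_left h _

lemma exists_maximal_sep {W : Type*} [MetricSpace W] (s : Set W) (δ : ℝ) (hδ : 0 ≤ δ) :
    ∃ T, T ⊆ s ∧ T.Pairwise (fun a b => δ < dist a b) ∧ ∀ y ∈ s, ∃ t ∈ T, dist y t ≤ δ := by
  have hch : ∀ c ⊆ {T : Set W | T ⊆ s ∧ T.Pairwise fun a b => δ < dist a b},
      IsChain (· ⊆ ·) c → ∃ ub ∈ {T : Set W | T ⊆ s ∧ T.Pairwise fun a b => δ < dist a b},
        ∀ t ∈ c, t ⊆ ub := by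
    intro c hcS hchain
    refine ⟨⋃₀ c, ?_, fun t ht => Set.subset_sUnion_of_mem ht⟩
    constructor
    · exact Set.sUnion_subset fun t ht => (hcS ht).1
    · intro a ha b hb hab
      obtain ⟨t₁, ht₁, ha'⟩ := ha
      obtain ⟨t₂, ht₂, hb'⟩ := hb
      rcases hchain.total ht₁ ht₂ with h | h
      · exact (hcS ht₂).2 (h ha') hb' hab
      · exact (hcS ht₁).2 ha' (h hb') hab
  obtain ⟨T, hT⟩ := zorn_subset {T : Set W | T ⊆ s ∧ T.Pairwise fun a b => δ < dist a b} hch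
  refine ⟨T, hT.prop.1, hT.prop.2, ?_⟩
  intro y hy
  by_contra hno
  push_neg at hno
  have hmem : insert y T ∈ {T : Set W | T ⊆ s ∧ T.Pairwise fun a b => δ < dist a b} := by
    refine ⟨Set.insert_subset hy hT.prop.1, ?_⟩
    refine @Set.Pairwise.insert_of_symmetric _ _ _ _ ⟨fun a b h => by rwa [dist_comm]⟩ hT.prop.2 ?_
    intro b hb _
    exact hno b hb
  have hyT : y ∈ T := hT.2 hmem (Set.subset_insert y T) (Set.mem_insert y T)
  have := hno y hyT
  simp only [dist_self] at this
  linarith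

lemma count_aux {α : Type*} [MeasurableSpace α] (μ : MeasureTheory.Measure α) (T : Set α)
    (Bl : α → Set α) (A : Set α) (e : ℝ≥0∞) (he : e ≠ 0) (he' : e ≠ ⊤)
    (hmeas : ∀ t ∈ T, MeasurableSet (Bl t))
    (hdisj : T.Pairwise (Function.onFun Disjoint Bl))
    (hsub : ∀ t ∈ T, Bl t ⊆ A)
    (hlow : ∀ t ∈ T, e ≤ μ (Bl t))
    (hA : μ A ≠ ⊤) :
    ∃ hf : T.Finite, (hf.toFinset.card : ℝ≥0∞) * e ≤ μ A := by
  have key : ∀ s : Finset α, ↑s ⊆ T → (s.card : ℝ≥0∞) * e ≤ μ A := by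
    intro s hs
    have h1 : (s.card : ℝ≥0∞) * e = ∑ _t ∈ s, e := by rw [Finset.sum_const, nsmul_eq_mul]
    rw [h1]
    calc ∑ _t ∈ s, e ≤ ∑ t ∈ s, μ (Bl t) := Finset.sum_le_sum fun t ht => hlow t (hs ht)
      _ = μ (⋃ t ∈ s, Bl t) :=
        (measure_biUnion_finset (hdisj.mono hs) fun t ht => hmeas t (hs ht)).symm
      _ ≤ μ A := measure_mono (Set.iUnion₂_subset fun t ht => hsub t (hs ht))
  have hfin : T.Finite := by
    by_contra hinf
    obtain ⟨n, hn⟩ := ENNReal.exists_nat_gt (r := μ A / e) (by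
      simp only [ne_eq, ENNReal.div_eq_top]
      push_neg
      exact ⟨fun _ => he, fun h => absurd h hA⟩)
    have hinf' : T.Infinite := hinf
    obtain ⟨s, hsT, hcard⟩ := hinf'.exists_subset_card_eq n
    have h1 := key s hsT
    rw [hcard] at h1
    have h2 : μ A < n * e := (ENNReal.div_lt_iff (Or.inl he) (Or.inl he')).mp hn
    exact absurd h1 (not_le.mpr h2)
  exact ⟨hfin, key hfin.toFinset (by simp)⟩

lemma sum_le_card_mul {α : Type*} (s : Finset α) (f : α → ℝ≥0∞) (M : ℝ≥0∞)
    (h : ∀ t ∈ s, f t ≤ M) : ∑ t ∈ s, f t ≤ (s.card : ℝ≥0∞) * M := by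
  calc ∑ t ∈ s, f t ≤ ∑ _t ∈ s, M := Finset.sum_le_sum h
    _ = (s.card : ℝ≥0∞) * M := by rw [Finset.sum_const, nsmul_eq_mul]

end AuxLSE

/-- if `X` is normally large-scale foliated by `Y`, then, for parameters
independent of the leaf, the inclusion map `(Y_z, d_X, λ_z) → ([Y_z]_1, d_X, μ)` of a leaf
into its `1`-neighborhood is a large-scale equivalence, for almost every `z`. -/
theorem leaf_inclusion_isLSE
    {X Y Z : Type*} [MetricSpace X] [MeasurableSpace X] [BorelSpace X]
    [MetricSpace Y] [MeasurableSpace Y] [BorelSpace Y] [MeasurableSpace Z]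
    (μ : Measure X) (lam : Measure Y) (ν : Measure Z)
    (hμfin : FiniteOnBounded (fun x y : X => dist x y) μ)
    (hlamfin : FiniteOnBounded (fun x y : Y => dist x y) lam)
    (hXdbl : LocDoubling (fun x y : X => dist x y) μ)
    (hYdbl : LocDoubling (fun x y : Y => dist x y) lam)
    (leaf : Z → Set X) (lamz : Z → Measure X) (hmap : Z → Y → X) (P : LSEParams)
    (hfol : IsNormalLSFoliation (fun x y : X => dist x y) μ
      (fun x y : Y => dist x y) lam ν leaf lamz hmap P) :
    ∃ P' : LSEParams, ∀ᵐ z ∂ν,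
      IsLSEBetween (fun x y : X => dist x y) (leaf z) (lamz z)
        (fun x y : X => dist x y) (Metric.cthickening 1 (leaf z)) μ id P' := by
  classical
  obtain ⟨⟨huniq, hnull, hint, hae⟩, C₀, hC₀, hnorm⟩ := hfol
  simp only [dBall_dist_eq] at hnorm
  set c : ℝ := max P.C 0 with hc
  have hc0 : 0 ≤ c := le_max_right _ _
  -- closed-ball versions of the hypotheses
  have hXd : ∀ s : ℝ, 0 < s → ∃ C : ℝ, 0 < C ∧
      ∀ x : X, μ (Metric.closedBall x (2*s)) ≤ ENNReal.ofReal C * μ (Metric.closedBall x s) := by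
    intro s hs
    obtain ⟨C, h1, h2⟩ := hXdbl s hs
    exact ⟨C, h1, fun x => by simpa only [dBall_dist_eq] using h2 x⟩
  have hYd : ∀ s : ℝ, 0 < s → ∃ C : ℝ, 0 < C ∧
      ∀ y : Y, lam (Metric.closedBall y (2*s)) ≤ ENNReal.ofReal C * lam (Metric.closedBall y s) := by
    intro s hs
    obtain ⟨C, h1, h2⟩ := hYdbl s hs
    exact ⟨C, h1, fun y => by simpa only [dBall_dist_eq] using h2 y⟩
  have hμfin' : ∀ (x : X) (s : ℝ), μ (Metric.closedBall x s) ≠ ⊤ := by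
    intro x s
    have := hμfin x s
    rw [dBall_dist_eq] at this
    exact this.ne
  have hlamfin' : ∀ (y : Y) (s : ℝ), lam (Metric.closedBall y s) ≠ ⊤ := by
    intro y s
    have := hlamfin y s
    rw [dBall_dist_eq] at this
    exact this.ne
  obtain ⟨Dh, hDh0, hDh⟩ := hXd (1/2) (by norm_num)
  obtain ⟨D1, hD10, hD1⟩ := hXd 1 one_pos
  obtain ⟨D2, hD20, hD2⟩ := hXd 2 two_pos
  obtain ⟨D4, hD40, hD4⟩ := hXd 4 (by norm_num)
  have hC0pos : (0:ℝ) < C₀ := lt_of_lt_of_le one_pos hC₀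
  set e0 : ℝ≥0∞ := (ENNReal.ofReal C₀)⁻¹ with he0def
  have hoC0ne : ENNReal.ofReal C₀ ≠ 0 := by
    simp only [ne_eq, ENNReal.ofReal_eq_zero, not_le]; exact hC0pos
  have hoC0nt : ENNReal.ofReal C₀ ≠ ⊤ := ENNReal.ofReal_ne_top
  have he0ne : e0 ≠ 0 := by rw [he0def]; exact ENNReal.inv_ne_zero.mpr hoC0nt
  have he0nt : e0 ≠ ⊤ := by rw [he0def]; exact ENNReal.inv_ne_top.mpr hoC0ne
  have he0inv : e0⁻¹ = ENNReal.ofReal C₀ := by rw [he0def, inv_inv]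
  have hn1 : ∀ z, ∀ x ∈ leaf z, e0 ≤ μ (Metric.closedBall x 1) :=
    fun z x hx => (hnorm z x hx).1
  have hn3 : ∀ z, ∀ x ∈ leaf z, e0 ≤ lamz z (Metric.closedBall x 1) :=
    fun z x hx => (hnorm z x hx).2.2.1
  have hn4 : ∀ z, ∀ x ∈ leaf z, lamz z (Metric.closedBall x 1) ≤ ENNReal.ofReal C₀ :=
    fun z x hx => (hnorm z x hx).2.2.2
  -- uniform bounds on small μ-balls centered on leaves
  set M4 : ℝ≥0∞ := ENNReal.ofReal D2 * (ENNReal.ofReal D1 * ENNReal.ofReal C₀) with hM4def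
  have hM4nt : M4 ≠ ⊤ := by
    rw [hM4def]
    exact ENNReal.mul_ne_top ENNReal.ofReal_ne_top
      (ENNReal.mul_ne_top ENNReal.ofReal_ne_top ENNReal.ofReal_ne_top)
  have hM4b : ∀ z, ∀ x ∈ leaf z, μ (Metric.closedBall x 4) ≤ M4 := by
    intro z x hx
    have h2 := hD2 x
    have h1 := hD1 x
    norm_num at h2 h1
    calc μ (Metric.closedBall x 4) ≤ ENNReal.ofReal D2 * μ (Metric.closedBall x 2) := h2
      _ ≤ ENNReal.ofReal D2 * (ENNReal.ofReal D1 * μ (Metric.closedBall x 1)) :=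
        mul_le_mul_right h1 _
      _ ≤ M4 := by
        rw [hM4def]
        exact mul_le_mul_right (mul_le_mul_right ((hnorm z x hx).2.1) _) _
  set M8 : ℝ≥0∞ := ENNReal.ofReal D4 * M4 with hM8def
  have hM8nt : M8 ≠ ⊤ := ENNReal.mul_ne_top ENNReal.ofReal_ne_top hM4nt
  have hM8b : ∀ z, ∀ x ∈ leaf z, μ (Metric.closedBall x 8) ≤ M8 := by
    intro z x hx
    have h4 := hD4 x
    norm_num at h4
    calc μ (Metric.closedBall x 8) ≤ ENNReal.ofReal D4 * μ (Metric.closedBall x 4) := h4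
      _ ≤ M8 := mul_le_mul_right (hM4b z x hx) _
  set eh : ℝ≥0∞ := (ENNReal.ofReal Dh)⁻¹ * e0 with hehdef
  have hoDhne : ENNReal.ofReal Dh ≠ 0 := by
    simp only [ne_eq, ENNReal.ofReal_eq_zero, not_le]; exact hDh0
  have hehne : eh ≠ 0 := by
    rw [hehdef]
    exact mul_ne_zero (ENNReal.inv_ne_zero.mpr ENNReal.ofReal_ne_top) he0ne
  have hehnt : eh ≠ ⊤ := by
    rw [hehdef]
    exact ENNReal.mul_ne_top (ENNReal.inv_ne_top.mpr hoDhne) he0nt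
  have hhalf : ∀ z, ∀ x ∈ leaf z, eh ≤ μ (Metric.closedBall x (1/2)) := by
    intro z x hx
    have h' : (ENNReal.ofReal Dh)⁻¹ * μ (Metric.closedBall x 1) ≤ μ (Metric.closedBall x (1/2)) := by
      refine enn_cancel_left hoDhne ENNReal.ofReal_ne_top ?_
      have h := hDh x
      have he : (2:ℝ) * (1/2) = 1 := by norm_num
      rw [he] at h
      exact h
    exact le_trans (mul_le_mul_right (hn1 z x hx) _) h'
  -- the leaf measure only charges the leaf
  have hmL : ∀ z (A : Set X), lamz z A ≤ lamz z (A ∩ leaf z) := by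
    intro z A
    calc lamz z A ≤ lamz z ((A ∩ leaf z) ∪ (leaf z)ᶜ) := measure_mono (fun w hw => by
          by_cases h : w ∈ leaf z
          · exact Or.inl ⟨hw, h⟩
          · exact Or.inr h)
      _ ≤ lamz z (A ∩ leaf z) + lamz z (leaf z)ᶜ := measure_union_le _ _
      _ = lamz z (A ∩ leaf z) := by rw [hnull z, add_zero]
  -- consequences of the leaf LSE
  have hGood : ∀ z, IsLSEBetween (fun a b : Y => dist a b) Set.univ lam
      (fun a b : X => dist a b) (leaf z) (lamz z) (hmap z) P →
      (∀ x ∈ leaf z, ∃ a : Y, dist (hmap z a) x ≤ c) ∧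
      (∀ s : ℝ, P.r0 ≤ s → 0 < P.Cr s ∧ ∀ a : Y,
        lam (Metric.closedBall a s) ≤
          ENNReal.ofReal (P.Cr s) * lamz z (Metric.closedBall (hmap z a) s ∩ leaf z) ∧
        lamz z (Metric.closedBall (hmap z a) s ∩ leaf z) ≤
          ENNReal.ofReal (P.Cr s) * lam (Metric.closedBall a s)) := by
    intro z Hz
    obtain ⟨-, -, -, -, -, hsurj, hvol⟩ := Hz
    constructor
    · intro x hx
      obtain ⟨a, -, ha⟩ := hsurj x hx
      exact ⟨a, le_trans ha (le_max_left _ _)⟩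
    · intro s hs
      obtain ⟨hCr, hvol'⟩ := hvol s hs
      refine ⟨hCr, fun a => ?_⟩
      have h := hvol' a (Set.mem_univ a)
      simp only [dBall_dist_eq, Set.inter_univ] at h
      have hCrne : ENNReal.ofReal (P.Cr s) ≠ 0 := by
        simp only [ne_eq, ENNReal.ofReal_eq_zero, not_le]; exact hCr
      constructor
      · have h1 := h.1
        rw [ENNReal.ofReal_inv_of_pos hCr] at h1
        exact enn_le_cancel hCrne ENNReal.ofReal_ne_top h1
      · exact h.2
  -- leaf measures are finite on balls centered on the leaf
  have hmfin : ∀ z, IsLSEBetween (fun a b : Y => dist a b) Set.univ lam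
      (fun a b : X => dist a b) (leaf z) (lamz z) (hmap z) P →
      ∀ x ∈ leaf z, ∀ ρ : ℝ, lamz z (Metric.closedBall x ρ) ≠ ⊤ := by
    intro z Hz x hx ρ
    obtain ⟨hsu, hvo⟩ := hGood z Hz
    obtain ⟨a, ha⟩ := hsu x hx
    set s : ℝ := max (ρ + c) P.r0 with hsdef
    have hs : P.r0 ≤ s := le_max_right _ _
    have hsub : Metric.closedBall x ρ ⊆ Metric.closedBall (hmap z a) s := by
      intro w hw
      rw [Metric.mem_closedBall] at hw ⊢
      calc dist w (hmap z a) ≤ dist w x + dist x (hmap z a) := dist_triangle _ _ _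
        _ ≤ ρ + c := add_le_add hw (by rw [dist_comm]; exact ha)
        _ ≤ s := le_max_left _ _
    have h1 : lamz z (Metric.closedBall x ρ) ≤
        ENNReal.ofReal (P.Cr s) * lam (Metric.closedBall a s) :=
      le_trans (hmL z _) (le_trans (measure_mono (Set.inter_subset_inter_left _ hsub))
        ((hvo s hs).2 a).2)
    exact ne_top_of_le_ne_top
      (ENNReal.mul_ne_top ENNReal.ofReal_ne_top (hlamfin' a s)) h1
  -- large-scale "doubling" for the leaf measures, with leaf-independent constants
  set rmin : ℝ := max (max (P.r0 + c) (4 + 3*c)) 1 with hrmin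
  have hshift : ∀ ρ : ℝ, rmin ≤ ρ → ∃ Q : ℝ≥0∞, Q ≠ ⊤ ∧ ∀ z,
      IsLSEBetween (fun a b : Y => dist a b) Set.univ lam
        (fun a b : X => dist a b) (leaf z) (lamz z) (hmap z) P →
      ∀ x ∈ leaf z,
        lamz z (Metric.closedBall x (ρ + 4)) ≤ Q * lamz z (Metric.closedBall x ρ) := by
    intro ρ hρ
    have h1 : P.r0 + c ≤ ρ := le_trans (le_trans (le_max_left _ _) (le_max_left _ _)) hρ
    have h2 : 4 + 3*c ≤ ρ := le_trans (le_trans (le_max_right _ _) (le_max_left _ _)) hρ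
    have hρc : 0 < ρ - c := by linarith
    obtain ⟨Dρ, hDρ0, hDρ⟩ := hYd (ρ - c) hρc
    refine ⟨ENNReal.ofReal (P.Cr (ρ+4+c)) * (ENNReal.ofReal Dρ * ENNReal.ofReal (P.Cr (ρ - c))),
      ENNReal.mul_ne_top ENNReal.ofReal_ne_top
        (ENNReal.mul_ne_top ENNReal.ofReal_ne_top ENNReal.ofReal_ne_top), ?_⟩
    intro z Hz x hx
    obtain ⟨hsu, hvo⟩ := hGood z Hz
    obtain ⟨a, ha⟩ := hsu x hx
    have hax : dist x (hmap z a) ≤ c := by rw [dist_comm]; exact ha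
    have hsub1 : Metric.closedBall x (ρ+4) ⊆ Metric.closedBall (hmap z a) (ρ+4+c) := by
      intro w hw
      rw [Metric.mem_closedBall] at hw ⊢
      calc dist w (hmap z a) ≤ dist w x + dist x (hmap z a) := dist_triangle _ _ _
        _ ≤ ρ+4 + c := add_le_add hw hax
    have hsub2 : Metric.closedBall (hmap z a) (ρ-c) ⊆ Metric.closedBall x ρ := by
      intro w hw
      rw [Metric.mem_closedBall] at hw ⊢
      calc dist w x ≤ dist w (hmap z a) + dist (hmap z a) x := dist_triangle _ _ _
        _ ≤ (ρ - c) + c := add_le_add hw ha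
        _ = ρ := by ring
    have step1 : lamz z (Metric.closedBall x (ρ+4)) ≤
        ENNReal.ofReal (P.Cr (ρ+4+c)) * lam (Metric.closedBall a (ρ+4+c)) :=
      le_trans (hmL z _) (le_trans (measure_mono (Set.inter_subset_inter_left _ hsub1))
        ((hvo (ρ+4+c) (by linarith)).2 a).2)
    have step2 : lam (Metric.closedBall a (ρ+4+c)) ≤
        ENNReal.ofReal Dρ * lam (Metric.closedBall a (ρ-c)) := by
      refine le_trans (measure_mono (Metric.closedBall_subset_closedBall (by linarith))) (hDρ a)
    have step3 : lam (Metric.closedBall a (ρ-c)) ≤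
        ENNReal.ofReal (P.Cr (ρ-c)) * lamz z (Metric.closedBall (hmap z a) (ρ-c) ∩ leaf z) :=
      ((hvo (ρ-c) (by linarith)).2 a).1
    have step4 : lamz z (Metric.closedBall (hmap z a) (ρ-c) ∩ leaf z) ≤
        lamz z (Metric.closedBall x ρ) :=
      measure_mono (le_trans Set.inter_subset_left hsub2)
    calc lamz z (Metric.closedBall x (ρ+4))
        ≤ ENNReal.ofReal (P.Cr (ρ+4+c)) * lam (Metric.closedBall a (ρ+4+c)) := step1
      _ ≤ ENNReal.ofReal (P.Cr (ρ+4+c)) * (ENNReal.ofReal Dρ * lam (Metric.closedBall a (ρ-c))) :=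
        mul_le_mul_right step2 _
      _ ≤ ENNReal.ofReal (P.Cr (ρ+4+c)) * (ENNReal.ofReal Dρ * (ENNReal.ofReal (P.Cr (ρ-c)) *
          lamz z (Metric.closedBall (hmap z a) (ρ-c) ∩ leaf z))) :=
        mul_le_mul_right (mul_le_mul_right step3 _) _
      _ ≤ ENNReal.ofReal (P.Cr (ρ+4+c)) * (ENNReal.ofReal Dρ * (ENNReal.ofReal (P.Cr (ρ-c)) *
          lamz z (Metric.closedBall x ρ))) :=
        mul_le_mul_right (mul_le_mul_right (mul_le_mul_right step4 _) _) _
      _ = ENNReal.ofReal (P.Cr (ρ+4+c)) * (ENNReal.ofReal Dρ * ENNReal.ofReal (P.Cr (ρ - c))) *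
          lamz z (Metric.closedBall x ρ) := by ring
  -- uniform bound on leaf-measures of balls of radius 3
  set Q3 : ℝ≥0∞ := (M4 * eh⁻¹) * ENNReal.ofReal C₀ with hQ3def
  have hQ3nt : Q3 ≠ ⊤ := by
    rw [hQ3def]
    exact ENNReal.mul_ne_top (ENNReal.mul_ne_top hM4nt (ENNReal.inv_ne_top.mpr hehne)) hoC0nt
  have hm3 : ∀ z, ∀ x ∈ leaf z, lamz z (Metric.closedBall x 3) ≤ Q3 := by
    intro z x hx
    obtain ⟨T, hTs, hTsep, hTcov⟩ :=
      exists_maximal_sep (leaf z ∩ Metric.closedBall x 3) 1 one_pos.le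
    have hTleaf : ∀ t ∈ T, t ∈ leaf z := fun t ht => (hTs ht).1
    obtain ⟨hTfin, hcard⟩ := count_aux μ T (fun t => Metric.closedBall t (1/2))
      (Metric.closedBall x 4) eh hehne hehnt
      (fun t _ => measurableSet_closedBall)
      (fun a ha b hb hab => Metric.closedBall_disjoint_closedBall
        (by have := hTsep ha hb hab; linarith))
      (fun t ht => by
        intro w hw
        rw [Metric.mem_closedBall] at hw ⊢
        have ht3 : dist t x ≤ 3 := (hTs ht).2
        calc dist w x ≤ dist w t + dist t x := dist_triangle _ _ _
          _ ≤ 1/2 + 3 := add_le_add hw ht3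
          _ ≤ 4 := by norm_num)
      (fun t ht => hhalf z t (hTleaf t ht))
      (hμfin' x 4)
    have hcov : Metric.closedBall x 3 ∩ leaf z ⊆
        ⋃ t ∈ hTfin.toFinset, Metric.closedBall t 1 := by
      intro w hw
      obtain ⟨t, ht, hdist⟩ := hTcov w ⟨hw.2, hw.1⟩
      exact Set.mem_biUnion (hTfin.mem_toFinset.mpr ht) (Metric.mem_closedBall.mpr hdist)
    calc lamz z (Metric.closedBall x 3) ≤ lamz z (Metric.closedBall x 3 ∩ leaf z) := hmL z _
      _ ≤ lamz z (⋃ t ∈ hTfin.toFinset, Metric.closedBall t 1) := measure_mono hcov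
      _ ≤ ∑ t ∈ hTfin.toFinset, lamz z (Metric.closedBall t 1) := measure_biUnion_finset_le _ _
      _ ≤ (hTfin.toFinset.card : ℝ≥0∞) * ENNReal.ofReal C₀ := sum_le_card_mul _ _ _
          (fun t ht => hn4 z t (hTleaf t (hTfin.mem_toFinset.mp ht)))
      _ ≤ (μ (Metric.closedBall x 4) * eh⁻¹) * ENNReal.ofReal C₀ :=
          mul_le_mul_left (enn_card_bound hehne hehnt hcard) _
      _ ≤ Q3 := by
          rw [hQ3def]
          exact mul_le_mul_left (mul_le_mul_left (hM4b z x hx) _) _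
  -- Lemma A : upper bound for the ambient measure of the thickened leaf
  have hlemA : ∀ (ρ : ℝ), ∀ z, IsLSEBetween (fun a b : Y => dist a b) Set.univ lam
      (fun a b : X => dist a b) (leaf z) (lamz z) (hmap z) P → ∀ x ∈ leaf z,
      μ (Metric.closedBall x ρ ∩ Metric.cthickening 1 (leaf z)) ≤
        (lamz z (Metric.closedBall x (ρ+3)) * e0⁻¹) * M8 := by
    intro ρ z Hz x hx
    obtain ⟨S, hSs, hSsep, hScov⟩ :=
      exists_maximal_sep (leaf z ∩ Metric.closedBall x (ρ+2)) 5 (by norm_num)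
    have hSleaf : ∀ t ∈ S, t ∈ leaf z := fun t ht => (hSs ht).1
    obtain ⟨hSfin, hcard⟩ := count_aux (lamz z) S (fun t => Metric.closedBall t 1)
      (Metric.closedBall x (ρ+3)) e0 he0ne he0nt
      (fun t _ => measurableSet_closedBall)
      (fun a ha b hb hab => Metric.closedBall_disjoint_closedBall
        (by have := hSsep ha hb hab; linarith))
      (fun t ht => by
        intro w hw
        rw [Metric.mem_closedBall] at hw ⊢
        have ht2 : dist t x ≤ ρ+2 := (hSs ht).2
        calc dist w x ≤ dist w t + dist t x := dist_triangle _ _ _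
          _ ≤ 1 + (ρ+2) := add_le_add hw ht2
          _ = ρ+3 := by ring)
      (fun t ht => hn3 z t (hSleaf t ht))
      (hmfin z Hz x hx (ρ+3))
    have hcov : Metric.closedBall x ρ ∩ Metric.cthickening 1 (leaf z) ⊆
        ⋃ t ∈ hSfin.toFinset, Metric.closedBall t 7 := by
      intro w hw
      have hinf : EMetric.infEdist w (leaf z) < ENNReal.ofReal 2 := by
        have hle : EMetric.infEdist w (leaf z) ≤ ENNReal.ofReal 1 :=
          Metric.mem_cthickening_iff.mp hw.2
        exact lt_of_le_of_lt hle
          ((ENNReal.ofReal_lt_ofReal_iff (by norm_num)).mpr (by norm_num))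
      obtain ⟨y, hyL, hyd⟩ := EMetric.infEdist_lt_iff.mp hinf
      have hyd' : dist w y < 2 := edist_lt_ofReal.mp hyd
      have hy3 : y ∈ leaf z ∩ Metric.closedBall x (ρ+2) := by
        refine ⟨hyL, ?_⟩
        rw [Metric.mem_closedBall]
        have hwx : dist w x ≤ ρ := hw.1
        calc dist y x ≤ dist y w + dist w x := dist_triangle _ _ _
          _ ≤ 2 + ρ := add_le_add (by rw [dist_comm]; linarith) hwx
          _ = ρ + 2 := by ring
      obtain ⟨t, htS, htd⟩ := hScov y hy3
      refine Set.mem_biUnion (hSfin.mem_toFinset.mpr htS) ?_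
      rw [Metric.mem_closedBall]
      calc dist w t ≤ dist w y + dist y t := dist_triangle _ _ _
        _ ≤ 2 + 5 := add_le_add hyd'.le htd
        _ = 7 := by norm_num
    calc μ (Metric.closedBall x ρ ∩ Metric.cthickening 1 (leaf z))
        ≤ μ (⋃ t ∈ hSfin.toFinset, Metric.closedBall t 7) := measure_mono hcov
      _ ≤ ∑ t ∈ hSfin.toFinset, μ (Metric.closedBall t 7) := measure_biUnion_finset_le _ _
      _ ≤ (hSfin.toFinset.card : ℝ≥0∞) * M8 := sum_le_card_mul _ _ _ (fun t ht =>
          le_trans (measure_mono (Metric.closedBall_subset_closedBall (by norm_num)))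
            (hM8b z t (hSleaf t (hSfin.mem_toFinset.mp ht))))
      _ ≤ (lamz z (Metric.closedBall x (ρ+3)) * e0⁻¹) * M8 :=
          mul_le_mul_left (enn_card_bound he0ne he0nt hcard) _
  -- Lemma B : lower bound
  have hlemB : ∀ (ρ : ℝ), ∀ z, ∀ x ∈ leaf z,
      lamz z (Metric.closedBall x ρ) ≤
        (μ (Metric.closedBall x (ρ+1) ∩ Metric.cthickening 1 (leaf z)) * e0⁻¹) * Q3 := by
    intro ρ z x hx
    obtain ⟨S, hSs, hSsep, hScov⟩ :=
      exists_maximal_sep (leaf z ∩ Metric.closedBall x ρ) 3 (by norm_num)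
    have hSleaf : ∀ t ∈ S, t ∈ leaf z := fun t ht => (hSs ht).1
    obtain ⟨hSfin, hcard⟩ := count_aux μ S (fun t => Metric.closedBall t 1)
      (Metric.closedBall x (ρ+1) ∩ Metric.cthickening 1 (leaf z)) e0 he0ne he0nt
      (fun t _ => measurableSet_closedBall)
      (fun a ha b hb hab => Metric.closedBall_disjoint_closedBall
        (by have := hSsep ha hb hab; linarith))
      (fun t ht => by
        intro w hw
        rw [Metric.mem_closedBall] at hw
        constructor
        · rw [Metric.mem_closedBall]
          have htρ : dist t x ≤ ρ := (hSs ht).2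
          calc dist w x ≤ dist w t + dist t x := dist_triangle _ _ _
            _ ≤ 1 + ρ := add_le_add hw htρ
            _ = ρ+1 := by ring
        · refine Metric.mem_cthickening_iff.mpr ?_
          refine le_trans (EMetric.infEdist_le_edist_of_mem (hSleaf t ht)) ?_
          rw [edist_dist]
          exact ENNReal.ofReal_le_ofReal hw)
      (fun t ht => hn1 z t (hSleaf t ht))
      (ne_top_of_le_ne_top (hμfin' x (ρ+1)) (measure_mono Set.inter_subset_left))
    have hcov : Metric.closedBall x ρ ∩ leaf z ⊆
        ⋃ t ∈ hSfin.toFinset, Metric.closedBall t 3 := by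
      intro w hw
      obtain ⟨t, ht, hdist⟩ := hScov w ⟨hw.2, hw.1⟩
      exact Set.mem_biUnion (hSfin.mem_toFinset.mpr ht) (Metric.mem_closedBall.mpr hdist)
    calc lamz z (Metric.closedBall x ρ) ≤ lamz z (Metric.closedBall x ρ ∩ leaf z) := hmL z _
      _ ≤ lamz z (⋃ t ∈ hSfin.toFinset, Metric.closedBall t 3) := measure_mono hcov
      _ ≤ ∑ t ∈ hSfin.toFinset, lamz z (Metric.closedBall t 3) := measure_biUnion_finset_le _ _
      _ ≤ (hSfin.toFinset.card : ℝ≥0∞) * Q3 := sum_le_card_mul _ _ _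
          (fun t ht => hm3 z t (hSleaf t (hSfin.mem_toFinset.mp ht)))
      _ ≤ (μ (Metric.closedBall x (ρ+1) ∩ Metric.cthickening 1 (leaf z)) * e0⁻¹) * Q3 :=
          mul_le_mul_left (enn_card_bound he0ne he0nt hcard) _
  -- the key comparison, with leaf-independent constants
  have key : ∀ r : ℝ, rmin + 1 ≤ r → ∃ K : ℝ, 0 < K ∧ ∀ z,
      IsLSEBetween (fun a b : Y => dist a b) Set.univ lam
        (fun a b : X => dist a b) (leaf z) (lamz z) (hmap z) P →
      ∀ x ∈ leaf z,
        lamz z (Metric.closedBall x r ∩ leaf z) ≤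
          ENNReal.ofReal K * μ (Metric.closedBall x r ∩ Metric.cthickening 1 (leaf z)) ∧
        μ (Metric.closedBall x r ∩ Metric.cthickening 1 (leaf z)) ≤
          ENNReal.ofReal K * lamz z (Metric.closedBall x r ∩ leaf z) := by
    intro r hr
    have hrm1 : (1:ℝ) ≤ rmin := le_trans (le_max_right _ _) le_rfl
    obtain ⟨Qr, hQrt, hQr⟩ := hshift r (by linarith)
    obtain ⟨Qr1, hQr1t, hQr1⟩ := hshift (r-1) (by linarith)
    set Q1 : ℝ≥0∞ := (Qr * e0⁻¹) * M8 with hQ1def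
    set Q2 : ℝ≥0∞ := Qr1 * ((e0⁻¹) * Q3) with hQ2def
    have hQ1nt : Q1 ≠ ⊤ := by
      rw [hQ1def, he0inv]
      exact ENNReal.mul_ne_top (ENNReal.mul_ne_top hQrt hoC0nt) hM8nt
    have hQ2nt : Q2 ≠ ⊤ := by
      rw [hQ2def, he0inv]
      exact ENNReal.mul_ne_top hQr1t (ENNReal.mul_ne_top hoC0nt hQ3nt)
    refine ⟨max Q1.toReal (max Q2.toReal 1), by positivity, ?_⟩
    intro z Hz x hx
    have hQ1le : Q1 ≤ ENNReal.ofReal (max Q1.toReal (max Q2.toReal 1)) :=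
      le_trans (le_of_eq (ENNReal.ofReal_toReal hQ1nt).symm)
        (ENNReal.ofReal_le_ofReal (le_max_left _ _))
    have hQ2le : Q2 ≤ ENNReal.ofReal (max Q1.toReal (max Q2.toReal 1)) :=
      le_trans (le_of_eq (ENNReal.ofReal_toReal hQ2nt).symm)
        (ENNReal.ofReal_le_ofReal (le_trans (le_max_left _ _) (le_max_right _ _)))
    constructor
    · -- lower bound : lamz ≤ K * μ
      have hB := hlemB (r-1) z x hx
      have heq : r - 1 + 1 = r := by ring
      rw [heq] at hB
      have hsh := hQr1 z Hz x hx
      have heq2 : r - 1 + 4 = r + 3 := by ring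
      rw [heq2] at hsh
      calc lamz z (Metric.closedBall x r ∩ leaf z)
          ≤ lamz z (Metric.closedBall x (r+3)) :=
            measure_mono (le_trans Set.inter_subset_left
              (Metric.closedBall_subset_closedBall (by linarith)))
        _ ≤ Qr1 * lamz z (Metric.closedBall x (r-1)) := hsh
        _ ≤ Qr1 * ((μ (Metric.closedBall x r ∩ Metric.cthickening 1 (leaf z)) * e0⁻¹) * Q3) :=
            mul_le_mul_right hB _
        _ = Q2 * μ (Metric.closedBall x r ∩ Metric.cthickening 1 (leaf z)) := by
            rw [hQ2def]; ring
        _ ≤ ENNReal.ofReal (max Q1.toReal (max Q2.toReal 1)) *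
            μ (Metric.closedBall x r ∩ Metric.cthickening 1 (leaf z)) :=
            mul_le_mul_left hQ2le _
    · -- upper bound : μ ≤ K * lamz
      have hA := hlemA r z Hz x hx
      have hsh := hQr z Hz x hx
      calc μ (Metric.closedBall x r ∩ Metric.cthickening 1 (leaf z))
          ≤ (lamz z (Metric.closedBall x (r+3)) * e0⁻¹) * M8 := hA
        _ ≤ (lamz z (Metric.closedBall x (r+4)) * e0⁻¹) * M8 :=
            mul_le_mul_left (mul_le_mul_left
              (measure_mono (Metric.closedBall_subset_closedBall (by linarith))) _) _
        _ ≤ ((Qr * lamz z (Metric.closedBall x r)) * e0⁻¹) * M8 :=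
            mul_le_mul_left (mul_le_mul_left hsh _) _
        _ ≤ ((Qr * lamz z (Metric.closedBall x r ∩ leaf z)) * e0⁻¹) * M8 :=
            mul_le_mul_left (mul_le_mul_left (mul_le_mul_right (hmL z _) _) _) _
        _ = Q1 * lamz z (Metric.closedBall x r ∩ leaf z) := by rw [hQ1def]; ring
        _ ≤ ENNReal.ofReal (max Q1.toReal (max Q2.toReal 1)) *
            lamz z (Metric.closedBall x r ∩ leaf z) := mul_le_mul_left hQ1le _
  -- assemble the parameters
  refine ⟨⟨id, id, 2, rmin + 1,
    fun r => if h : rmin + 1 ≤ r then (key r h).choose else 1⟩, ?_⟩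
  filter_upwards [hae] with z Hz
  refine ⟨monotone_id, monotone_id, tendsto_id, ?_, ?_, ?_, ?_⟩
  · intro x hx
    exact Metric.self_subset_cthickening _ hx
  · intro x _ y _
    exact ⟨le_rfl, le_rfl⟩
  · intro b hb
    have hinf : EMetric.infEdist b (leaf z) < ENNReal.ofReal 2 := by
      have hle : EMetric.infEdist b (leaf z) ≤ ENNReal.ofReal 1 :=
        Metric.mem_cthickening_iff.mp hb
      exact lt_of_le_of_lt hle
        ((ENNReal.ofReal_lt_ofReal_iff (by norm_num)).mpr (by norm_num))
    obtain ⟨y, hyL, hyd⟩ := EMetric.infEdist_lt_iff.mp hinf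
    have hyd' : dist b y < 2 := edist_lt_ofReal.mp hyd
    exact ⟨y, hyL, by simp only [id]; rw [dist_comm]; exact hyd'.le⟩
  · intro r hr
    dsimp only at hr ⊢
    rw [dif_pos hr]
    obtain ⟨hKpos, hK⟩ := (key r hr).choose_spec
    refine ⟨hKpos, ?_⟩
    intro x hx
    have h := hK z Hz x hx
    set K := (key r hr).choose with hKdef
    have hoKne : ENNReal.ofReal K ≠ 0 := by
      simp only [ne_eq, ENNReal.ofReal_eq_zero, not_le]; exact hKpos
    simp only [dBall_dist_eq, id]
    constructor
    · rw [ENNReal.ofReal_inv_of_pos hKpos]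
      exact enn_cancel_left hoKne ENNReal.ofReal_ne_top h.1
    · exact h.2
end
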